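/- For integers F ≥ 1 and any real x ∈ [0,1] representing S*/OPT, the guarantee of FlowDec as a function of x is at least max{1 - x + x/F, x}, and min over x ∈ [0,1] of max{1 - x + x/F, x} equals F/(2F-1), attained at x = F/(2F-1). -/

import Mathlib

/-- Reparameterization by x = S*/OPT: FlowDec's guarantee max{1-x+x/F, x} is
minimized over [0,1] at x = F/(2F-1), with value F/(2F-1). -/
theorem flowdec_reparam (F : ℕ) (hF : 1 ≤ F) :
    (∀ x ∈ Set.Icc (0 : ℝ) 1,
      (F : ℝ) / (2 * F - 1) ≤ max (1 - x + x / F) x) ∧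
    ((F : ℝ) / (2 * F - 1) ∈ Set.Icc (0 : ℝ) 1) ∧
    max (1 - (F : ℝ) / (2 * F - 1) + ((F : ℝ) / (2 * F - 1)) / F)
        ((F : ℝ) / (2 * F - 1)) = (F : ℝ) / (2 * F - 1) := by
  have hF1 : (1 : ℝ) ≤ (F : ℝ) := by exact_mod_cast hF
  have hFpos : (0 : ℝ) < F := by linarith
  have hd : (0 : ℝ) < 2 * F - 1 := by linarith
  have heq : 1 - (F : ℝ) / (2 * F - 1) + ((F : ℝ) / (2 * F - 1)) / F
      = (F : ℝ) / (2 * F - 1) := by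
    have hd' : (F : ℝ) * 2 - 1 ≠ 0 := by linarith
    field_simp
    ring
  refine ⟨?_, ⟨by positivity, by rw [div_le_one hd]; linarith⟩, by rw [heq, max_self]⟩
  intro x ⟨hx0, hx1⟩
  rcases le_or_gt ((F : ℝ) / (2 * F - 1)) x with h | h
  · exact le_max_of_le_right h
  · refine le_max_of_le_left ?_
    rw [lt_div_iff₀ hd] at h
    rw [div_le_iff₀ hd]
    have hxF : x / ↑F * ↑F = x := div_mul_cancel₀ x (ne_of_gt hFpos)
    have key : x * (2 * ↑F - 1) * (↑F - 1) ≤ ↑F * (↑F - 1) :=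
      mul_le_mul_of_nonneg_right h.le (by linarith)
    nlinarith [mul_pos hFpos hd, mul_nonneg (div_nonneg hx0 hFpos.le) hd.le]
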